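/- If X is semi-selfsimilar with scaling factors λ₁ > 1 and λ₂ > 1 (same index H), and log λ₁ / log λ₂ is irrational, and the one-dimensional distribution function t ↦ P(X(t) ≤ x) is continuous in t for each x, then X is self-similar with index H (the scaling relation holds for all c > 0) at the level of one-dimensional distributions. -/

import Mathlib

open MeasureTheory

/-- If `X` is semi-selfsimilar with two scaling factors `lam₁, lam₂ > 1` whose
logarithms have irrational ratio, and its one-dimensional distribution function
is continuous in `t`, then `X` is self-similar with index `H` (for all `c > 0`),
at the level of one-dimensional distributions. -/
theorem semiSelfsimilar_two_scales_irrational_implies_selfsimilar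
    {Ω : Type*} [MeasurableSpace Ω] (μ : Measure Ω) [IsProbabilityMeasure μ]
    (X : ℝ → Ω → ℝ) (H lam₁ lam₂ : ℝ) (hH : 0 < H)
    (hlam₁ : 1 < lam₁) (hlam₂ : 1 < lam₂)
    (hirr : Irrational (Real.log lam₁ / Real.log lam₂))
    (hss₁ : ∀ t : ℝ, 0 < t → ∀ x : ℝ,
      μ {ω | X (lam₁ * t) ω ≤ x} = μ {ω | lam₁ ^ H * X t ω ≤ x})
    (hss₂ : ∀ t : ℝ, 0 < t → ∀ x : ℝ,
      μ {ω | X (lam₂ * t) ω ≤ x} = μ {ω | lam₂ ^ H * X t ω ≤ x})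
    (hcont : ∀ x : ℝ,
      ContinuousOn (fun t : ℝ => μ {ω | X t ω ≤ x}) (Set.Ioi 0)) :
    ∀ c : ℝ, 0 < c → ∀ t : ℝ, 0 < t → ∀ x : ℝ,
      μ {ω | X (c * t) ω ≤ x} = μ {ω | c ^ H * X t ω ≤ x} := by
  have hl₁ : (0:ℝ) < lam₁ := lt_trans one_pos hlam₁
  have hl₂ : (0:ℝ) < lam₂ := lt_trans one_pos hlam₂
  -- set-rewriting lemma : for d > 0, {d^H * X t ≤ x} = {X t ≤ x / d^H}
  have hset : ∀ (d : ℝ), 0 < d → ∀ (s x : ℝ),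
      {ω : Ω | d ^ H * X s ω ≤ x} = {ω : Ω | X s ω ≤ x / d ^ H} := by
    intro d hd s x
    have hdH : 0 < d ^ H := Real.rpow_pos_of_pos hd H
    ext ω
    simp only [Set.mem_setOf_eq]
    exact (le_div_iff₀' hdH).symm
  -- the set of "good" scaling factors
  set P : ℝ → Prop := fun d =>
    0 < d ∧ ∀ s : ℝ, 0 < s → ∀ y : ℝ,
      μ {ω | X (d * s) ω ≤ y} = μ {ω | X s ω ≤ y / d ^ H} with hPdef
  have hP₁ : P lam₁ := by
    refine ⟨hl₁, fun s hs y => ?_⟩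
    rw [hss₁ s hs y, hset lam₁ hl₁ s y]
  have hP₂ : P lam₂ := by
    refine ⟨hl₂, fun s hs y => ?_⟩
    rw [hss₂ s hs y, hset lam₂ hl₂ s y]
  have hPmul : ∀ d e, P d → P e → P (d * e) := by
    rintro d e ⟨hd0, hd⟩ ⟨he0, he⟩
    refine ⟨mul_pos hd0 he0, fun s hs y => ?_⟩
    have h1 := hd (e * s) (mul_pos he0 hs) y
    have h2 := he s hs (y / d ^ H)
    rw [mul_assoc, h1, h2, div_div, ← Real.mul_rpow hd0.le he0.le]
  have hPone : P 1 := by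
    refine ⟨one_pos, fun s hs y => ?_⟩
    rw [one_mul, Real.one_rpow, div_one]
  have hPinv : ∀ d, P d → P d⁻¹ := by
    rintro d ⟨hd0, hd⟩
    refine ⟨inv_pos.2 hd0, fun s hs y => ?_⟩
    have h := hd (d⁻¹ * s) (mul_pos (inv_pos.2 hd0) hs) (y * d ^ H)
    have hdH : (0:ℝ) < d ^ H := Real.rpow_pos_of_pos hd0 H
    rw [← mul_assoc, mul_inv_cancel₀ (ne_of_gt hd0), one_mul,
      mul_div_cancel_right₀ _ (ne_of_gt hdH)] at h
    rw [← h, Real.inv_rpow hd0.le, div_eq_mul_inv, inv_inv]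
  -- the closure subgroup of logarithms
  set S : AddSubgroup ℝ := AddSubgroup.closure {Real.log lam₁, Real.log lam₂} with hSdef
  have hexpP : ∀ a ∈ S, P (Real.exp a) := by
    intro a ha
    induction ha using AddSubgroup.closure_induction with
    | mem x hx =>
      rcases hx with hx | hx
      · rw [hx, Real.exp_log hl₁]; exact hP₁
      · rw [Set.mem_singleton_iff.mp hx, Real.exp_log hl₂]; exact hP₂
    | zero => rw [Real.exp_zero]; exact hPone
    | add x y hx hy ihx ihy => rw [Real.exp_add]; exact hPmul _ _ ihx ihy
    | neg x hx ihx => rw [Real.exp_neg]; exact hPinv _ ihx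
  -- density of S
  have hdense : Dense (S : Set ℝ) := by
    rcases S.dense_or_cyclic with h | ⟨a, ha⟩
    · exact h
    · exfalso
      have h₁ : Real.log lam₁ ∈ S :=
        AddSubgroup.subset_closure (Set.mem_insert _ _)
      have h₂ : Real.log lam₂ ∈ S :=
        AddSubgroup.subset_closure (Set.mem_insert_of_mem _ rfl)
      rw [ha, AddSubgroup.mem_closure_singleton] at h₁ h₂
      obtain ⟨m, hm⟩ := h₁
      obtain ⟨n, hn⟩ := h₂
      have hlog₂ : Real.log lam₂ ≠ 0 := ne_of_gt (Real.log_pos hlam₂)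
      have ha0 : a ≠ 0 := by
        intro h0; rw [h0, smul_zero] at hn; exact hlog₂ hn.symm
      have hn0 : (n:ℝ) ≠ 0 := by
        intro h0
        rw [zsmul_eq_mul, h0, zero_mul] at hn
        exact hlog₂ hn.symm
      apply hirr
      refine ⟨(m : ℚ) / (n : ℚ), ?_⟩
      rw [← hm, ← hn, zsmul_eq_mul, zsmul_eq_mul]
      push_cast
      field_simp
  -- main argument
  intro c hc t ht x
  rw [hset c hc t x]
  -- construct approximating sequences from above and below
  have hseq : ∀ (l r : ℕ → ℝ), (∀ k, l k < r k) →
      ∃ u : ℕ → ℝ, ∀ k, u k ∈ (S : Set ℝ) ∧ l k < u k ∧ u k < r k := by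
    intro l r hlr
    have : ∀ k : ℕ, ∃ u : ℝ, u ∈ (S : Set ℝ) ∧ u ∈ Set.Ioo (l k) (r k) := by
      intro k
      exact hdense.exists_mem_open isOpen_Ioo (Set.nonempty_Ioo.2 (hlr k))
    choose u hu₁ hu₂ using this
    exact ⟨u, fun k => ⟨hu₁ k, (hu₂ k).1, (hu₂ k).2⟩⟩
  have hinv : Filter.Tendsto (fun k : ℕ => 1 / ((k : ℝ) + 1)) Filter.atTop (nhds 0) :=
    tendsto_one_div_add_atTop_nhds_zero_nat
  obtain ⟨sd, hsd⟩ := hseq (fun _ => Real.log c) (fun k => Real.log c + 1 / ((k:ℝ) + 1))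
    (fun k => by
      have : (0:ℝ) < 1 / ((k:ℝ) + 1) := by positivity
      linarith)
  obtain ⟨se, hse⟩ := hseq (fun k => Real.log c - 1 / ((k:ℝ) + 1)) (fun _ => Real.log c)
    (fun k => by
      have : (0:ℝ) < 1 / ((k:ℝ) + 1) := by positivity
      linarith)
  set d : ℕ → ℝ := fun k => Real.exp (sd k) with hd_def
  set e : ℕ → ℝ := fun k => Real.exp (se k) with he_def
  have hdP : ∀ k, P (d k) := fun k => hexpP _ (hsd k).1
  have heP : ∀ k, P (e k) := fun k => hexpP _ (hse k).1
  have hdc : ∀ k, c < d k := fun k => by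
    have := (hsd k).2.1
    calc c = Real.exp (Real.log c) := (Real.exp_log hc).symm
      _ < d k := Real.exp_lt_exp.2 this
  have hec : ∀ k, e k < c := fun k => by
    have := (hse k).2.2
    calc e k < Real.exp (Real.log c) := Real.exp_lt_exp.2 this
      _ = c := Real.exp_log hc
  have hsd_tendsto : Filter.Tendsto sd Filter.atTop (nhds (Real.log c)) := by
    apply tendsto_of_tendsto_of_tendsto_of_le_of_le (tendsto_const_nhds)
      (by simpa using (hinv.const_add (Real.log c)))
      (fun k => (hsd k).2.1.le) (fun k => (hsd k).2.2.le)
  have hse_tendsto : Filter.Tendsto se Filter.atTop (nhds (Real.log c)) := by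
    apply tendsto_of_tendsto_of_tendsto_of_le_of_le
      (by simpa using ((hinv.const_sub (Real.log c))))
      (tendsto_const_nhds)
      (fun k => (hse k).2.1.le) (fun k => (hse k).2.2.le)
  have hd_tendsto : Filter.Tendsto d Filter.atTop (nhds c) := by
    have := (Real.continuous_exp.tendsto (Real.log c)).comp hsd_tendsto
    rwa [Real.exp_log hc] at this
  have he_tendsto : Filter.Tendsto e Filter.atTop (nhds c) := by
    have := (Real.continuous_exp.tendsto (Real.log c)).comp hse_tendsto
    rwa [Real.exp_log hc] at this
  -- key convergence lemma
  have key : ∀ (u : ℕ → ℝ), (∀ k, P (u k)) → Filter.Tendsto u Filter.atTop (nhds c) →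
      Filter.Tendsto (fun k => μ {ω | X t ω ≤ x / (u k) ^ H}) Filter.atTop
        (nhds (μ {ω | X (c * t) ω ≤ x})) := by
    intro u huP hu
    have heq : (fun k => μ {ω | X t ω ≤ x / (u k) ^ H})
        = fun k => μ {ω | X (u k * t) ω ≤ x} := by
      funext k
      exact ((huP k).2 t ht x).symm
    rw [heq]
    have hct : c * t ∈ Set.Ioi (0:ℝ) := mul_pos hc ht
    have hcw : Filter.Tendsto (fun s : ℝ => μ {ω | X s ω ≤ x})
        (nhdsWithin (c * t) (Set.Ioi 0)) (nhds (μ {ω | X (c * t) ω ≤ x})) :=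
      (hcont x) (c * t) hct
    have hmt : Filter.Tendsto (fun k => u k * t) Filter.atTop
        (nhdsWithin (c * t) (Set.Ioi 0)) := by
      apply tendsto_nhdsWithin_of_tendsto_nhds_of_eventually_within
      · exact hu.mul_const t
      · exact Filter.Eventually.of_forall fun k => mul_pos (huP k).1 ht
    exact hcw.comp hmt
  -- monotonicity
  have hmono : ∀ y z : ℝ, y ≤ z → μ {ω | X t ω ≤ y} ≤ μ {ω | X t ω ≤ z} :=
    fun y z h => measure_mono fun ω hω => le_trans hω h
  have hcH : (0:ℝ) < c ^ H := Real.rpow_pos_of_pos hc H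
  rcases le_or_gt 0 x with hx | hx
  · -- x ≥ 0 : use d (from above) for ≤ and e (from below) for ≥
    apply le_antisymm
    · apply le_of_tendsto (key d hdP hd_tendsto)
      apply Filter.Eventually.of_forall
      intro k
      apply hmono
      have h1 : c ^ H ≤ (d k) ^ H := Real.rpow_le_rpow hc.le (hdc k).le hH.le
      exact div_le_div_of_nonneg_left hx hcH h1
    · apply ge_of_tendsto (key e heP he_tendsto)
      apply Filter.Eventually.of_forall
      intro k
      apply hmono
      have h1 : (e k) ^ H ≤ c ^ H := Real.rpow_le_rpow (heP k).1.le (hec k).le hH.le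
      exact div_le_div_of_nonneg_left hx (Real.rpow_pos_of_pos (heP k).1 H) h1
  · -- x < 0 : directions flip
    apply le_antisymm
    · apply le_of_tendsto (key e heP he_tendsto)
      apply Filter.Eventually.of_forall
      intro k
      apply hmono
      have hekH : (0:ℝ) < (e k) ^ H := Real.rpow_pos_of_pos (heP k).1 H
      have h1 : (e k) ^ H ≤ c ^ H := Real.rpow_le_rpow (heP k).1.le (hec k).le hH.le
      rw [div_eq_mul_inv, div_eq_mul_inv]
      exact mul_le_mul_of_nonpos_left (inv_anti₀ hekH h1) hx.le
    · apply ge_of_tendsto (key d hdP hd_tendsto)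
      apply Filter.Eventually.of_forall
      intro k
      apply hmono
      have h1 : c ^ H ≤ (d k) ^ H := Real.rpow_le_rpow hc.le (hdc k).le hH.le
      rw [div_eq_mul_inv, div_eq_mul_inv]
      exact mul_le_mul_of_nonpos_left (inv_anti₀ hcH h1) hx.le
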